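/- Let x : ℤ → ℤ satisfy x(n) ≥ −1 for all n ∈ ℤ, let i ∈ ℤ, and let t ∈ ℤ with t ≥ 0 be such that y_x(m,i) ≥ t for every m < i and y_x(m,i) = t for some m < i (so t is the type of i). Then the set of children of i, {j ∈ ℤ : j < i and R_x(j) = i}, is finite and has exactly x(i−1) + 1 − t elements. -/
import Mathlib


attribute [local instance] Classical.propDecidable

/-- The record map of an integer sequence: `n` is sent to the least integer `j > n`
with `∑_{l=n}^{j-1} x l ≥ 0` if such `j` exists, and to `n` otherwise. -/
noncomputable def recordMap (x : ℤ → ℤ) (n : ℤ) : ℤ :=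
  if ∃ j : ℤ, n < j ∧ 0 ≤ ∑ l ∈ Finset.Ico n j, x l then
    sInf {j : ℤ | n < j ∧ 0 ≤ ∑ l ∈ Finset.Ico n j, x l}
  else n

/-- If `x n ≥ -1` for all `n` and `t ≥ 0` is the type of `i` (the infimum of the past sums
`y_x(m,i)`, attained at some `m < i`), then `i` has exactly `x (i-1) + 1 - t` children
under the record map. -/
theorem children_count_of_type (x : ℤ → ℤ) (hx : ∀ n : ℤ, -1 ≤ x n) (i t : ℤ)
    (ht : 0 ≤ t)
    (hlb : ∀ m : ℤ, m < i → t ≤ ∑ l ∈ Finset.Ico m i, x l)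
    (hatt : ∃ m : ℤ, m < i ∧ (∑ l ∈ Finset.Ico m i, x l) = t) :
    {j : ℤ | j < i ∧ recordMap x j = i}.Finite ∧
      ({j : ℤ | j < i ∧ recordMap x j = i}.ncard : ℤ) = x (i - 1) + 1 - t := by
  set y : ℤ → ℤ := fun m => ∑ l ∈ Finset.Ico m i, x l with hy
  -- splitting sums
  have hsplit : ∀ j j' : ℤ, j ≤ j' → j' ≤ i →
      (∑ l ∈ Finset.Ico j j', x l) = y j - y j' := by
    intro j j' h1 h2
    have hu : Finset.Ico j j' ∪ Finset.Ico j' i = Finset.Ico j i :=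
      Finset.Ico_union_Ico_eq_Ico h1 h2
    have hd : Disjoint (Finset.Ico j j') (Finset.Ico j' i) :=
      Finset.Ico_disjoint_Ico_consecutive j j' i
    have hs := Finset.sum_union hd (f := x)
    rw [hu] at hs
    simp only [hy]
    linarith
  have hsingle : ∀ m : ℤ, Finset.Ico m (m + 1) = {m} := by
    intro m
    ext l
    simp only [Finset.mem_Ico, Finset.mem_singleton]
    omega
  have hyi1 : y (i - 1) = x (i - 1) := by
    have : Finset.Ico (i - 1) i = {i - 1} := by
      have := hsingle (i - 1)
      rw [show i - 1 + 1 = i by ring] at this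
      exact this
    simp [hy, this]
  have hstep : ∀ m : ℤ, m < i → y m = x m + y (m + 1) := by
    intro m hm
    have h := hsplit m (m + 1) (by omega) (by omega)
    rw [hsingle m] at h
    simp at h
    linarith
  -- characterization of children
  have hchild : ∀ j : ℤ, j < i →
      (recordMap x j = i ↔ ∀ j' : ℤ, j < j' → j' < i → y j < y j') := by
    intro j hj
    have hyj0 : 0 ≤ y j := le_trans ht (hlb j hj)
    have hiS : j < i ∧ 0 ≤ ∑ l ∈ Finset.Ico j i, x l := ⟨hj, hyj0⟩
    have hbdd : BddBelow {j' : ℤ | j < j' ∧ 0 ≤ ∑ l ∈ Finset.Ico j j', x l} :=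
      ⟨j, fun s hs => hs.1.le⟩
    constructor
    · intro hr j' h1 h2
      rw [recordMap, if_pos ⟨i, hiS⟩] at hr
      by_contra hlt
      push_neg at hlt
      have hj'S : j' ∈ {j'' : ℤ | j < j'' ∧ 0 ≤ ∑ l ∈ Finset.Ico j j'', x l} := by
        refine ⟨h1, ?_⟩
        rw [hsplit j j' h1.le h2.le]
        linarith
      have := csInf_le hbdd hj'S
      omega
    · intro h
      have hleast : IsLeast {j' : ℤ | j < j' ∧ 0 ≤ ∑ l ∈ Finset.Ico j j', x l} i := by
        refine ⟨hiS, fun s hs => ?_⟩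
        by_contra hsi
        push_neg at hsi
        have h1 := h s hs.1 hsi
        have h2 := hs.2
        rw [hsplit j s hs.1.le hsi.le] at h2
        linarith
      rw [recordMap, if_pos ⟨i, hiS⟩]
      exact hleast.csInf_eq
  set C : Set ℤ := {j : ℤ | j < i ∧ recordMap x j = i} with hC
  have htx : t ≤ x (i - 1) := by
    have := hlb (i - 1) (by omega)
    rw [← hyi1]; exact this
  -- bijection
  have hmaps : Set.MapsTo y C (Set.Icc t (x (i - 1))) := by
    intro j hj
    obtain ⟨hji, hr⟩ := hj
    refine ⟨hlb j hji, ?_⟩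
    rcases eq_or_lt_of_le (show j ≤ i - 1 by omega) with h | h
    · rw [h, hyi1]
    · have := (hchild j hji).mp hr (i - 1) h (by omega)
      rw [hyi1] at this
      linarith
  have hinj : Set.InjOn y C := by
    intro j1 h1 j2 h2 hne
    by_contra hcon
    rcases lt_trichotomy j1 j2 with h | h | h
    · have := (hchild j1 h1.1).mp h1.2 j2 h h2.1; omega
    · exact hcon h
    · have := (hchild j2 h2.1).mp h2.2 j1 h h1.1; omega
  have hsurj : Set.SurjOn y C (Set.Icc t (x (i - 1))) := by
    intro v hv
    obtain ⟨hv1, hv2⟩ := hv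
    obtain ⟨m0, hm0, hym0⟩ := hatt
    set A : Finset ℤ := (Finset.Ico m0 i).filter (fun j => y j ≤ v) with hA
    have hAne : A.Nonempty := by
      refine ⟨m0, ?_⟩
      rw [hA, Finset.mem_filter, Finset.mem_Ico]
      exact ⟨⟨le_refl _, hm0⟩, by rw [hy]; simp only; omega⟩
    set j := A.max' hAne with hjdef
    have hjA : j ∈ A := A.max'_mem hAne
    rw [hA, Finset.mem_filter, Finset.mem_Ico] at hjA
    obtain ⟨⟨hm0j, hji⟩, hyjv⟩ := hjA
    have hgt : ∀ j' : ℤ, j < j' → j' < i → v < y j' := by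
      intro j' h1 h2
      by_contra hcon
      push_neg at hcon
      have : j' ∈ A := by
        rw [hA, Finset.mem_filter, Finset.mem_Ico]
        exact ⟨⟨by omega, h2⟩, hcon⟩
      have := A.le_max' j' this
      omega
    have hyjv' : y j = v := by
      rcases eq_or_lt_of_le (show j + 1 ≤ i by omega) with h | h
      · have h4 : y j = x (i - 1) := by rw [show j = i - 1 by omega, hyi1]
        omega
      · have h1 := hgt (j + 1) (by omega) h
        have h2 := hstep j hji
        have h3 := hx j
        omega
    have hjC : j ∈ C := by
      refine ⟨hji, (hchild j hji).mpr ?_⟩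
      intro j' h1 h2
      rw [hyjv']
      exact hgt j' h1 h2
    exact ⟨j, hjC, hyjv'⟩
  have hbij : Set.BijOn y C (Set.Icc t (x (i - 1))) := ⟨hmaps, hinj, hsurj⟩
  have himg : y '' C = Set.Icc t (x (i - 1)) := hbij.image_eq
  have hfin : C.Finite := by
    apply Set.Finite.of_finite_image _ hinj
    rw [himg]
    exact Set.finite_Icc _ _
  refine ⟨hfin, ?_⟩
  have hncard : C.ncard = (Set.Icc t (x (i - 1))).ncard := by
    rw [← himg, Set.ncard_image_of_injOn hinj]
  rw [hncard, ← Finset.coe_Icc, Set.ncard_coe_finset, Int.card_Icc]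
  rw [Int.toNat_of_nonneg (by omega)]
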